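/- There exists a trace for which the strong schedulable happens-before relation does not exist, i.e., no partial order on its events satisfies PO, RAD, and StrongWRD. Concretely, the trace T = [thread 1: rd(y) at position 1, thread 1: wr(x) at position 2, thread 2: rd(x) at position 3, thread 2: wr(y) at position 4] has W(rd(y)@1) = {wr(y)@4} and W(rd(x)@3) = {wr(x)@2}, and any relation satisfying PO and StrongWRD contains the cycle rd(y)@1 → wr(x)@2 → rd(x)@3 → wr(y)@4 → rd(y)@1, contradicting antisymmetry. -/
import Mathlib


/-- Operations an event can perform: read/write on a shared variable,
    acquire/release on a mutex. Variables and mutexes are named by naturals. -/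
inductive Op : Type where
  | read : ℕ → Op
  | write : ℕ → Op
  | acq : ℕ → Op
  | rel : ℕ → Op
deriving DecidableEq

/-- An event carries a thread identifier, a trace position and an operation. -/
structure Event : Type where
  tid : ℕ
  pos : ℕ
  op : Op
deriving DecidableEq

/-- A trace is well formed if the recorded position of each event equals its index. -/
def WellFormed (T : List Event) : Prop :=
  ∀ i : Fin T.length, (T.get i).pos = (i : ℕ)

/-- Program-order edge: same thread, earlier position. -/
def POEdge (T : List Event) (e f : Event) : Prop :=
  e ∈ T ∧ f ∈ T ∧ e.tid = f.tid ∧ e.pos < f.pos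

/-- Release-acquire edge: a release of mutex `y` before an acquire of `y` in another
    thread, with no intervening acquire of `y` by a thread other than the releasing one. -/
def RADEdge (T : List Event) (e f : Event) : Prop :=
  e ∈ T ∧ f ∈ T ∧ ∃ y, e.op = Op.rel y ∧ f.op = Op.acq y ∧
    e.tid ≠ f.tid ∧ e.pos < f.pos ∧
    ∀ g ∈ T, e.pos < g.pos → g.pos < f.pos → g.tid ≠ e.tid → g.op ≠ Op.acq y

/-- The happens-before relation: smallest (strict) partial order containing PO and RAD,
    i.e. the transitive closure of the PO and RAD edges. -/
def HB (T : List Event) : Event → Event → Prop :=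
  Relation.TransGen (fun e f => POEdge T e f ∨ RADEdge T e f)

/-- Two events are unsynchronized if neither happens before the other. -/
def Unsync (T : List Event) (e f : Event) : Prop := ¬ HB T e f ∧ ¬ HB T f e

/-- Unsynchronized WRD candidates for the read `r` on variable `x`. -/
def W1 (T : List Event) (x : ℕ) (r : Event) : Set Event :=
  {w | w ∈ T ∧ w.op = Op.write x ∧ Unsync T r w ∧
    ∀ w' ∈ T, w' ≠ w → w'.op = Op.write x → Unsync T r w' → ¬ HB T w w'}

/-- Synchronized WRD candidates for the read `r` on variable `x`. -/
def W2 (T : List Event) (x : ℕ) (r : Event) : Set Event :=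
  {w | w ∈ T ∧ w.op = Op.write x ∧ HB T w r ∧
    ∀ w' ∈ T, w' ≠ w → w'.op = Op.write x → HB T w' r → ¬ HB T w w'}

/-- All WRD candidates. -/
def Wcand (T : List Event) (x : ℕ) (r : Event) : Set Event :=
  W1 T x r ∪ W2 T x r

/-- Write-read dependency edge: the nearest preceding write on the same variable. -/
def WRDEdge (T : List Event) (w r : Event) : Prop :=
  w ∈ T ∧ r ∈ T ∧ ∃ x, w.op = Op.write x ∧ r.op = Op.read x ∧ w.pos < r.pos ∧
    ∀ g ∈ T, w.pos < g.pos → g.pos < r.pos → g.op ≠ Op.write x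

/-- The schedulable happens-before relation: smallest partial order containing
    PO, RAD and WRD edges. -/
def SHB (T : List Event) : Event → Event → Prop :=
  Relation.TransGen (fun e f => POEdge T e f ∨ RADEdge T e f ∨ WRDEdge T e f)

/-- Every read event enjoys an initial write. -/
def InitialWrites (T : List Event) : Prop :=
  ∀ r ∈ T, ∀ x, r.op = Op.read x → (W2 T x r).Nonempty

/-- A some-schedulable happens-before relation: any (strict) partial order satisfying
    PO and RAD such that every read is preceded by some of its WRD candidates. -/
structure SomeSHB (T : List Event) (R : Event → Event → Prop) : Prop where
  trans : ∀ {a b c : Event}, R a b → R b c → R a c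
  irrefl : ∀ a : Event, ¬ R a a
  po : ∀ {e f : Event}, POEdge T e f → R e f
  rad : ∀ {e f : Event}, RADEdge T e f → R e f
  wrd : ∀ r ∈ T, ∀ x, r.op = Op.read x → ∃ w ∈ Wcand T x r, R w r

/-- A WRD-candidate edge of the graph derived from `T` (labelled `W(r)`). -/
def CandEdge (T : List Event) (w r : Event) : Prop :=
  r ∈ T ∧ ∃ x, r.op = Op.read x ∧ w ∈ Wcand T x r

/-- An edge of the graph derived from `T`: an HB edge or a WRD-candidate edge. -/
def GEdge (T : List Event) (e f : Event) : Prop :=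
  HB T e f ∨ CandEdge T e f

/-- A path in the graph derived from `T`: a nonempty sequence of edges
    visiting pairwise distinct nodes. -/
def GPath (T : List Event) (e f : Event) : Prop :=
  ∃ (n : ℕ) (p : Fin (n + 1) → Event), 0 < n ∧ Function.Injective p ∧
    p 0 = e ∧ p (Fin.last n) = f ∧
    ∀ i : Fin n, GEdge T (p i.castSucc) (p i.succ)


def myT : List Event :=
  [⟨1, 0, Op.read 1⟩, ⟨1, 1, Op.write 0⟩, ⟨2, 2, Op.read 0⟩, ⟨2, 3, Op.write 1⟩]

lemma hb_char {e f : Event} (h : HB myT e f) :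
    (e = ⟨1,0,Op.read 1⟩ ∧ f = ⟨1,1,Op.write 0⟩) ∨
    (e = ⟨2,2,Op.read 0⟩ ∧ f = ⟨2,3,Op.write 1⟩) := by
  induction h with
  | single h =>
    rcases h with ⟨he, hf, htid, hpos⟩ | ⟨he, hf, y, hrel, _⟩
    · fin_cases he <;> fin_cases hf <;> simp_all
    · fin_cases he <;> simp_all
  | tail _ h ih =>
    rcases h with ⟨he, hf, htid, hpos⟩ | ⟨he, hf, y, hrel, _⟩
    · rcases ih with ⟨h1, h2⟩ | ⟨h1, h2⟩ <;> subst h2 <;> fin_cases hf <;> simp_all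
    · rcases ih with ⟨h1, h2⟩ | ⟨h1, h2⟩ <;> subst h2 <;> simp_all

lemma wc1 : Wcand myT 1 ⟨1, 0, Op.read 1⟩ = {⟨2, 3, Op.write 1⟩} := by
  ext w
  constructor
  · rintro (⟨hw, hop, _⟩ | ⟨hw, hop, _⟩) <;> fin_cases hw <;> simp_all
  · rintro rfl
    left
    refine ⟨by simp [myT], rfl, ⟨fun h => ?_, fun h => ?_⟩, ?_⟩
    · rcases hb_char h with ⟨_, h2⟩ | ⟨h1, _⟩ <;> simp_all
    · rcases hb_char h with ⟨h1, _⟩ | ⟨_, h2⟩ <;> simp_all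
    · intro w' hw' hne hop _ h
      rcases hb_char h with ⟨h1, _⟩ | ⟨h1, _⟩ <;> simp_all

lemma wc2 : Wcand myT 0 ⟨2, 2, Op.read 0⟩ = {⟨1, 1, Op.write 0⟩} := by
  ext w
  constructor
  · rintro (⟨hw, hop, _⟩ | ⟨hw, hop, _⟩) <;> fin_cases hw <;> simp_all
  · rintro rfl
    left
    refine ⟨by simp [myT], rfl, ⟨fun h => ?_, fun h => ?_⟩, ?_⟩
    · rcases hb_char h with ⟨_, h2⟩ | ⟨h1, _⟩ <;> simp_all
    · rcases hb_char h with ⟨h1, _⟩ | ⟨_, h2⟩ <;> simp_all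
    · intro w' hw' hne hop _ h
      rcases hb_char h with ⟨h1, _⟩ | ⟨h1, _⟩ <;> simp_all

/-- there is a trace for which no strong schedulable happens-before
    relation exists: for the concrete trace
    `[1:rd(y), 1:wr(x), 2:rd(x), 2:wr(y)]` (with `x = 0`, `y = 1`) we have
    `W(rd y) = {wr y}` and `W(rd x) = {wr x}`, and no partial order satisfies
    PO, RAD and StrongWRD. -/
theorem stmt12 :
    ∃ T : List Event,
      T = [⟨1, 0, Op.read 1⟩, ⟨1, 1, Op.write 0⟩, ⟨2, 2, Op.read 0⟩, ⟨2, 3, Op.write 1⟩] ∧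
      WellFormed T ∧
      Wcand T 1 ⟨1, 0, Op.read 1⟩ = {⟨2, 3, Op.write 1⟩} ∧
      Wcand T 0 ⟨2, 2, Op.read 0⟩ = {⟨1, 1, Op.write 0⟩} ∧
      ¬ ∃ R : Event → Event → Prop,
          (∀ a b c : Event, R a b → R b c → R a c) ∧
          (∀ a : Event, ¬ R a a) ∧
          (∀ e f : Event, POEdge T e f → R e f) ∧
          (∀ e f : Event, RADEdge T e f → R e f) ∧
          (∀ r ∈ T, ∀ x, r.op = Op.read x → ∀ w ∈ Wcand T x r, R w r) := by
  
  refine ⟨myT, rfl, ?_, wc1, wc2, ?_⟩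
  · intro i; fin_cases i <;> rfl
  · rintro ⟨R, htr, hirr, hpo, -, hwrd⟩
    have ha : (⟨1,0,Op.read 1⟩ : Event) ∈ myT := by simp [myT]
    have hc : (⟨2,2,Op.read 0⟩ : Event) ∈ myT := by simp [myT]
    have rab : R ⟨1,0,Op.read 1⟩ ⟨1,1,Op.write 0⟩ :=
      hpo _ _ ⟨by simp [myT], by simp [myT], rfl, by norm_num⟩
    have rcd : R ⟨2,2,Op.read 0⟩ ⟨2,3,Op.write 1⟩ :=
      hpo _ _ ⟨by simp [myT], by simp [myT], rfl, by norm_num⟩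
    have rbc : R ⟨1,1,Op.write 0⟩ ⟨2,2,Op.read 0⟩ :=
      hwrd _ hc 0 rfl _ (by rw [wc2]; rfl)
    have rda : R ⟨2,3,Op.write 1⟩ ⟨1,0,Op.read 1⟩ :=
      hwrd _ ha 1 rfl _ (by rw [wc1]; rfl)
    exact hirr _ (htr _ _ _ (htr _ _ _ (htr _ _ _ rab rbc) rcd) rda)
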